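/- For discrete random variables v, v̂, d: I(v; d) + I(v; v̂) ≤ H(v) + I(v̂; d). Equivalently, the sum of pairwise informations of v with d and with v̂ is bounded by the entropy of v plus the information shared between d and v̂. -/

import Mathlib

open Finset

variable {Ω : Type*} [Fintype Ω]

/-- Probability that random variable `X` takes value `s`, under mass function `μ`. -/
noncomputable def probOf (μ : Ω → ℝ) {S : Type*} [DecidableEq S] (X : Ω → S) (s : S) : ℝ :=
  ∑ ω ∈ Finset.univ.filter fun ω => X ω = s, μ ω

/-- `μ` is a probability mass function on the finite sample space `Ω`. -/
def IsProbMass (μ : Ω → ℝ) : Prop := (∀ ω, 0 ≤ μ ω) ∧ ∑ ω, μ ω = 1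

/-- Shannon entropy of a finitely supported random variable. -/
noncomputable def entropy (μ : Ω → ℝ) {S : Type*} [Fintype S] [DecidableEq S]
    (X : Ω → S) : ℝ :=
  ∑ s : S, Real.negMulLog (probOf μ X s)

/-- Conditional Shannon entropy `H(X | Y) = H(X, Y) - H(Y)`. -/
noncomputable def condEntropy (μ : Ω → ℝ) {S T : Type*} [Fintype S] [DecidableEq S]
    [Fintype T] [DecidableEq T] (X : Ω → S) (Y : Ω → T) : ℝ :=
  entropy μ (fun ω => (X ω, Y ω)) - entropy μ Y

/-- Mutual information `I(X; Y) = H(X) + H(Y) - H(X, Y)`. -/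
noncomputable def mutualInfo (μ : Ω → ℝ) {S T : Type*} [Fintype S] [DecidableEq S]
    [Fintype T] [DecidableEq T] (X : Ω → S) (Y : Ω → T) : ℝ :=
  entropy μ X + entropy μ Y - entropy μ (fun ω => (X ω, Y ω))

/-- Conditional mutual information `I(X; Y | Z) = H(X,Z) + H(Y,Z) - H(X,Y,Z) - H(Z)`. -/
noncomputable def condMutualInfo (μ : Ω → ℝ) {S T U : Type*} [Fintype S] [DecidableEq S]
    [Fintype T] [DecidableEq T] [Fintype U] [DecidableEq U]
    (X : Ω → S) (Y : Ω → T) (Z : Ω → U) : ℝ :=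
  entropy μ (fun ω => (X ω, Z ω)) + entropy μ (fun ω => (Y ω, Z ω))
    - entropy μ (fun ω => (X ω, Y ω, Z ω)) - entropy μ Z

/-- Independence of two random variables: the joint distribution factorizes. -/
def IndepRV (μ : Ω → ℝ) {S T : Type*} [DecidableEq S] [DecidableEq T]
    (X : Ω → S) (Y : Ω → T) : Prop :=
  ∀ s t, probOf μ (fun ω => (X ω, Y ω)) (s, t) = probOf μ X s * probOf μ Y t

/-! ### Auxiliary lemmas -/

lemma negMulLog_add_le' {a b : ℝ} (ha : 0 ≤ a) (hb : 0 ≤ b) :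
    Real.negMulLog (a + b) ≤ Real.negMulLog a + Real.negMulLog b := by
  rcases ha.eq_or_lt with h | h
  · simp [← h]
  rcases hb.eq_or_lt with h' | h'
  · simp [← h']
  have l1 : Real.log a ≤ Real.log (a + b) := Real.log_le_log h (by linarith)
  have l2 : Real.log b ≤ Real.log (a + b) := Real.log_le_log h' (by linarith)
  simp only [Real.negMulLog, neg_mul]
  nlinarith [mul_le_mul_of_nonneg_left l1 h.le, mul_le_mul_of_nonneg_left l2 h'.le]

lemma negMulLog_sum_le' {ι : Type*} (s : Finset ι) (f : ι → ℝ) (hf : ∀ i ∈ s, 0 ≤ f i) :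
    Real.negMulLog (∑ i ∈ s, f i) ≤ ∑ i ∈ s, Real.negMulLog (f i) := by
  induction s using Finset.cons_induction with
  | empty => simp
  | cons a s ha ih =>
    rw [Finset.sum_cons, Finset.sum_cons]
    have h1 : 0 ≤ f a := hf a (Finset.mem_cons_self _ _)
    have h2 : 0 ≤ ∑ i ∈ s, f i :=
      Finset.sum_nonneg fun i hi => hf i (Finset.mem_cons_of_mem hi)
    exact (negMulLog_add_le' h1 h2).trans
      (add_le_add_right (ih fun i hi => hf i (Finset.mem_cons_of_mem hi)) _)

lemma gibbs_point' {a b : ℝ} (ha : 0 ≤ a) (hb0 : 0 ≤ b) (h : 0 < a → 0 < b) :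
    a - b ≤ a * Real.log a - a * Real.log b := by
  rcases ha.eq_or_lt with h0 | h0
  · simp [← h0, hb0]
  have hb := h h0
  have hlog := Real.log_le_sub_one_of_pos (show (0:ℝ) < b / a from div_pos hb h0)
  rw [Real.log_div hb.ne' h0.ne'] at hlog
  have hba : a * (b / a) = b := mul_div_cancel₀ b h0.ne'
  nlinarith [mul_le_mul_of_nonneg_left hlog h0.le]

lemma submod_aux {V VH D : Type*} [Fintype V] [Fintype VH] [Fintype D]
    (q : V → VH → D → ℝ) (hq : ∀ x y z, 0 ≤ q x y z)
    (hsum : ∑ x, ∑ y, ∑ z, q x y z = 1) :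
    ∑ x, Real.negMulLog (∑ y, ∑ z, q x y z) + ∑ x, ∑ y, ∑ z, Real.negMulLog (q x y z)
      ≤ ∑ x, ∑ y, Real.negMulLog (∑ z, q x y z)
        + ∑ x, ∑ z, Real.negMulLog (∑ y, q x y z) := by
  classical
  set P1 : V → ℝ := fun x => ∑ y, ∑ z, q x y z with hP1
  set P12 : V → VH → ℝ := fun x y => ∑ z, q x y z with hP12
  set P13 : V → D → ℝ := fun x z => ∑ y, q x y z with hP13
  set b : V → VH → D → ℝ :=
    fun x y z => if P1 x = 0 then 0 else P12 x y * P13 x z / P1 x with hb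
  have hP1nn : ∀ x, 0 ≤ P1 x := fun x =>
    Finset.sum_nonneg fun y _ => Finset.sum_nonneg fun z _ => hq x y z
  have hP12nn : ∀ x y, 0 ≤ P12 x y := fun x y => Finset.sum_nonneg fun z _ => hq x y z
  have hP13nn : ∀ x z, 0 ≤ P13 x z := fun x z => Finset.sum_nonneg fun y _ => hq x y z
  have hbnn : ∀ x y z, 0 ≤ b x y z := by
    intro x y z
    by_cases hx : P1 x = 0
    · simp [hb, hx]
    · simp only [hb, if_neg hx]
      exact div_nonneg (mul_nonneg (hP12nn x y) (hP13nn x z))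
        (hP1nn x)
  have hP12le : ∀ x y z, q x y z ≤ P12 x y := fun x y z =>
    Finset.single_le_sum (fun z _ => hq x y z) (Finset.mem_univ z)
  have hP13le : ∀ x y z, q x y z ≤ P13 x z := fun x y z =>
    Finset.single_le_sum (f := fun y => q x y z) (fun y _ => hq x y z) (Finset.mem_univ y)
  have hP1le : ∀ x y, P12 x y ≤ P1 x := fun x y =>
    Finset.single_le_sum (f := fun y => P12 x y) (fun y _ => hP12nn x y) (Finset.mem_univ y)
  have hP13sum : ∀ x, ∑ z, P13 x z = P1 x := by
    intro x; rw [hP1]; exact Finset.sum_comm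
  have hbsum : ∑ x, ∑ y, ∑ z, b x y z ≤ 1 := by
    rw [← hsum]
    refine Finset.sum_le_sum fun x _ => ?_
    by_cases hx : P1 x = 0
    · simp only [hb, if_neg, hx, if_pos]
      simpa using hP1nn x
    · simp only [hb, if_neg hx]
      have : ∀ y, ∑ z, P12 x y * P13 x z / P1 x = P12 x y := by
        intro y
        rw [← Finset.sum_div, ← Finset.mul_sum, hP13sum x,
          mul_div_assoc, div_self hx, mul_one]
      rw [Finset.sum_congr rfl fun y _ => this y]
  have main : 0 ≤ ∑ x, ∑ y, ∑ z,
      (q x y z * Real.log (q x y z) - q x y z * Real.log (b x y z)) := by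
    have step : ∑ x, ∑ y, ∑ z, (q x y z - b x y z)
        ≤ ∑ x, ∑ y, ∑ z, (q x y z * Real.log (q x y z) - q x y z * Real.log (b x y z)) := by
      refine Finset.sum_le_sum fun x _ => Finset.sum_le_sum fun y _ =>
        Finset.sum_le_sum fun z _ => ?_
      refine gibbs_point' (hq x y z) (hbnn x y z) fun hpos => ?_
      have h1 : 0 < P1 x := lt_of_lt_of_le hpos ((hP12le x y z).trans (hP1le x y))
      simp only [hb, if_neg h1.ne']
      exact div_pos (mul_pos (lt_of_lt_of_le hpos (hP12le x y z))
        (lt_of_lt_of_le hpos (hP13le x y z))) h1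
    have : ∑ x, ∑ y, ∑ z, (q x y z - b x y z) = 1 - ∑ x, ∑ y, ∑ z, b x y z := by
      simp [Finset.sum_sub_distrib, hsum]
      exact hsum
    linarith
  have id1 : ∑ x, Real.negMulLog (P1 x)
      = ∑ x, ∑ y, ∑ z, -(q x y z * Real.log (P1 x)) := by
    refine Finset.sum_congr rfl fun x _ => ?_
    simp only [Real.negMulLog_eq_neg, Finset.sum_neg_distrib, ← Finset.sum_mul, hP1]
  have id12 : ∑ x, ∑ y, Real.negMulLog (P12 x y)
      = ∑ x, ∑ y, ∑ z, -(q x y z * Real.log (P12 x y)) := by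
    refine Finset.sum_congr rfl fun x _ => Finset.sum_congr rfl fun y _ => ?_
    simp only [Real.negMulLog_eq_neg, Finset.sum_neg_distrib, ← Finset.sum_mul, hP12, hP13]
  have id13 : ∑ x, ∑ z, Real.negMulLog (P13 x z)
      = ∑ x, ∑ y, ∑ z, -(q x y z * Real.log (P13 x z)) := by
    refine Finset.sum_congr rfl fun x _ => ?_
    rw [Finset.sum_comm]
    refine Finset.sum_congr rfl fun z _ => ?_
    simp only [Real.negMulLog_eq_neg, Finset.sum_neg_distrib, ← Finset.sum_mul, hP12, hP13]
  have idq : ∑ x, ∑ y, ∑ z, Real.negMulLog (q x y z)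
      = ∑ x, ∑ y, ∑ z, -(q x y z * Real.log (q x y z)) := by
    simp [Real.negMulLog]
  have ptwise : ∀ x y z,
      q x y z * Real.log (q x y z) - q x y z * Real.log (b x y z)
      = -(q x y z * Real.log (P12 x y)) + -(q x y z * Real.log (P13 x z))
        - -(q x y z * Real.log (P1 x)) - -(q x y z * Real.log (q x y z)) := by
    intro x y z
    rcases (hq x y z).eq_or_lt with h0 | h0
    · simp [← h0]
    have h12 : 0 < P12 x y := lt_of_lt_of_le h0 (hP12le x y z)
    have h13 : 0 < P13 x z := lt_of_lt_of_le h0 (hP13le x y z)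
    have h1 : 0 < P1 x := lt_of_lt_of_le h12 (hP1le x y)
    have hbv : Real.log (b x y z)
        = Real.log (P12 x y) + Real.log (P13 x z) - Real.log (P1 x) := by
      simp only [hb, if_neg h1.ne']
      rw [Real.log_div (mul_ne_zero h12.ne' h13.ne') h1.ne',
        Real.log_mul h12.ne' h13.ne']
    rw [hbv]; ring
  have total : ∑ x, ∑ y, ∑ z,
      (q x y z * Real.log (q x y z) - q x y z * Real.log (b x y z))
      = (∑ x, ∑ y, Real.negMulLog (P12 x y) + ∑ x, ∑ z, Real.negMulLog (P13 x z))
        - (∑ x, Real.negMulLog (P1 x) + ∑ x, ∑ y, ∑ z, Real.negMulLog (q x y z)) := by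
    rw [id1, id12, id13, idq]
    rw [Finset.sum_congr rfl fun x _ => Finset.sum_congr rfl fun y _ =>
      Finset.sum_congr rfl fun z _ => ptwise x y z]
    simp only [Finset.sum_add_distrib, Finset.sum_sub_distrib, Finset.sum_neg_distrib]
    ring
  linarith [total ▸ main]

lemma probOf_eq_sum_ite' (μ : Ω → ℝ) {S : Type*} [DecidableEq S] (X : Ω → S) (s : S) :
    probOf μ X s = ∑ ω, if X ω = s then μ ω else 0 := Finset.sum_filter _ _

lemma sum_probOf' (μ : Ω → ℝ) {S : Type*} [Fintype S] [DecidableEq S] (X : Ω → S) :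
    ∑ s, probOf μ X s = ∑ ω, μ ω := by
  simp only [probOf_eq_sum_ite']
  rw [Finset.sum_comm]
  exact Finset.sum_congr rfl fun ω _ => by simp [Finset.sum_ite_eq]

lemma probOf_marg_fst (μ : Ω → ℝ) {S T : Type*} [DecidableEq S] [Fintype T] [DecidableEq T]
    (X : Ω → S) (Y : Ω → T) (s : S) :
    probOf μ X s = ∑ t, probOf μ (fun ω => (X ω, Y ω)) (s, t) := by
  simp only [probOf_eq_sum_ite']
  rw [Finset.sum_comm]
  refine Finset.sum_congr rfl fun ω _ => ?_
  by_cases h : X ω = s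
  · simp [Prod.ext_iff, h, Finset.sum_ite_eq]
  · simp [Prod.ext_iff, h]

lemma probOf_marg_snd (μ : Ω → ℝ) {S T : Type*} [Fintype S] [DecidableEq S] [DecidableEq T]
    (X : Ω → S) (Y : Ω → T) (t : T) :
    probOf μ Y t = ∑ s, probOf μ (fun ω => (X ω, Y ω)) (s, t) := by
  simp only [probOf_eq_sum_ite']
  rw [Finset.sum_comm]
  refine Finset.sum_congr rfl fun ω _ => ?_
  by_cases h : Y ω = t
  · simp [Prod.ext_iff, h, Finset.sum_ite_eq]
  · simp [Prod.ext_iff, h]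

lemma probOf_marg12 (μ : Ω → ℝ) {S T U : Type*} [DecidableEq S] [DecidableEq T]
    [Fintype U] [DecidableEq U] (X : Ω → S) (Y : Ω → T) (Z : Ω → U) (s : S) (t : T) :
    probOf μ (fun ω => (X ω, Y ω)) (s, t)
      = ∑ u, probOf μ (fun ω => (X ω, Y ω, Z ω)) (s, t, u) := by
  simp only [probOf_eq_sum_ite']
  rw [Finset.sum_comm]
  refine Finset.sum_congr rfl fun ω _ => ?_
  by_cases h : X ω = s ∧ Y ω = t
  · simp [Prod.ext_iff, h.1, h.2, Finset.sum_ite_eq]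
  · have h' : ∀ u, ¬ (X ω = s ∧ Y ω = t ∧ Z ω = u) := fun u hc => h ⟨hc.1, hc.2.1⟩
    simp only [Prod.ext_iff]
    rw [if_neg (by tauto)]
    refine (Finset.sum_eq_zero fun u _ => ?_).symm
    exact if_neg (by simpa using h' u)

lemma probOf_marg13 (μ : Ω → ℝ) {S T U : Type*} [DecidableEq S] [Fintype T] [DecidableEq T]
    [DecidableEq U] (X : Ω → S) (Y : Ω → T) (Z : Ω → U) (s : S) (u : U) :
    probOf μ (fun ω => (X ω, Z ω)) (s, u)
      = ∑ t, probOf μ (fun ω => (X ω, Y ω, Z ω)) (s, t, u) := by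
  simp only [probOf_eq_sum_ite']
  rw [Finset.sum_comm]
  refine Finset.sum_congr rfl fun ω _ => ?_
  by_cases h : X ω = s ∧ Z ω = u
  · simp [Prod.ext_iff, h.1, h.2, Finset.sum_ite_eq]
  · have h' : ∀ t, ¬ (X ω = s ∧ Y ω = t ∧ Z ω = u) := fun t hc => h ⟨hc.1, hc.2.2⟩
    simp only [Prod.ext_iff]
    rw [if_neg (by tauto)]
    refine (Finset.sum_eq_zero fun t _ => ?_).symm
    exact if_neg (by simpa using h' t)

theorem info_sum_le_entropy_add_leak {V VH D : Type*} [Fintype V] [DecidableEq V] [Fintype VH] [DecidableEq VH] [Fintype D] [DecidableEq D] (μ : Ω → ℝ) (hμ : IsProbMass μ) (v : Ω → V) (vh : Ω → VH) (d : Ω → D) :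
    mutualInfo μ v d + mutualInfo μ v vh ≤ entropy μ v + mutualInfo μ vh d := by
  classical
  obtain ⟨hpos, hsum⟩ := hμ
  have hqnn : ∀ x y z, 0 ≤ probOf μ (fun ω => (v ω, vh ω, d ω)) (x, y, z) :=
    fun x y z => Finset.sum_nonneg fun ω _ => hpos ω
  have htot : ∑ x, ∑ y, ∑ z, probOf μ (fun ω => (v ω, vh ω, d ω)) (x, y, z) = 1 := by
    have h := sum_probOf' μ (fun ω => (v ω, vh ω, d ω))
    simp only [Fintype.sum_prod_type] at h
    rw [h, hsum]
  -- entropy rewrites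
  have e1 : entropy μ v
      = ∑ x, Real.negMulLog (∑ y, ∑ z, probOf μ (fun ω => (v ω, vh ω, d ω)) (x, y, z)) := by
    unfold entropy
    refine Finset.sum_congr rfl fun x _ => ?_
    rw [probOf_marg_fst μ v (fun ω => (vh ω, d ω)) x, Fintype.sum_prod_type]
  have e12 : entropy μ (fun ω => (v ω, vh ω))
      = ∑ x, ∑ y, Real.negMulLog (∑ z, probOf μ (fun ω => (v ω, vh ω, d ω)) (x, y, z)) := by
    unfold entropy
    rw [Fintype.sum_prod_type]
    exact Finset.sum_congr rfl fun x _ => Finset.sum_congr rfl fun y _ => by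
      rw [probOf_marg12 μ v vh d x y]
  have e13 : entropy μ (fun ω => (v ω, d ω))
      = ∑ x, ∑ z, Real.negMulLog (∑ y, probOf μ (fun ω => (v ω, vh ω, d ω)) (x, y, z)) := by
    unfold entropy
    rw [Fintype.sum_prod_type]
    exact Finset.sum_congr rfl fun x _ => Finset.sum_congr rfl fun z _ => by
      rw [probOf_marg13 μ v vh d x z]
  have e23 : entropy μ (fun ω => (vh ω, d ω))
      = ∑ y, ∑ z, Real.negMulLog (∑ x, probOf μ (fun ω => (v ω, vh ω, d ω)) (x, y, z)) := by
    unfold entropy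
    rw [Fintype.sum_prod_type]
    refine Finset.sum_congr rfl fun y _ => Finset.sum_congr rfl fun z _ => ?_
    rw [probOf_marg_snd μ v (fun ω => (vh ω, d ω)) (y, z)]
  have eq3 : entropy μ (fun ω => (v ω, vh ω, d ω))
      = ∑ x, ∑ y, ∑ z, Real.negMulLog (probOf μ (fun ω => (v ω, vh ω, d ω)) (x, y, z)) := by
    unfold entropy
    simp only [Fintype.sum_prod_type]
  -- monotonicity: H(vh,d) ≤ H(v,vh,d)
  have mono : ∑ y, ∑ z, Real.negMulLog (∑ x, probOf μ (fun ω => (v ω, vh ω, d ω)) (x, y, z))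
      ≤ ∑ x, ∑ y, ∑ z, Real.negMulLog (probOf μ (fun ω => (v ω, vh ω, d ω)) (x, y, z)) :=
    calc ∑ y, ∑ z, Real.negMulLog (∑ x, probOf μ (fun ω => (v ω, vh ω, d ω)) (x, y, z))
        ≤ ∑ y, ∑ z, ∑ x, Real.negMulLog (probOf μ (fun ω => (v ω, vh ω, d ω)) (x, y, z)) :=
          Finset.sum_le_sum fun y _ => Finset.sum_le_sum fun z _ =>
            negMulLog_sum_le' _ _ fun x _ => hqnn x y z
      _ = ∑ y, ∑ x, ∑ z, Real.negMulLog (probOf μ (fun ω => (v ω, vh ω, d ω)) (x, y, z)) :=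
          Finset.sum_congr rfl fun y _ => Finset.sum_comm
      _ = ∑ x, ∑ y, ∑ z, Real.negMulLog (probOf μ (fun ω => (v ω, vh ω, d ω)) (x, y, z)) :=
          Finset.sum_comm
  have submod : ∑ x, Real.negMulLog (∑ y, ∑ z, probOf μ (fun ω => (v ω, vh ω, d ω)) (x, y, z))
      + ∑ x, ∑ y, ∑ z, Real.negMulLog (probOf μ (fun ω => (v ω, vh ω, d ω)) (x, y, z))
      ≤ ∑ x, ∑ y, Real.negMulLog (∑ z, probOf μ (fun ω => (v ω, vh ω, d ω)) (x, y, z))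
        + ∑ x, ∑ z, Real.negMulLog (∑ y, probOf μ (fun ω => (v ω, vh ω, d ω)) (x, y, z)) :=
    submod_aux (fun x y z => probOf μ (fun ω => (v ω, vh ω, d ω)) (x, y, z)) hqnn htot
  simp only [mutualInfo]
  rw [e1, e12, e13, e23]
  linarith [submod, mono]
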